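/- Let S be a commutative semiring. The following are equivalent: (1) c(fg) ⊆ c(f)c(g) ⊆ √(c(fg)) for all f, g ∈ S[X]; (2) √I is a subtractive ideal for every ideal I of S; (3) every prime ideal of S is subtractive. -/

import Mathlib

/-- The content of a polynomial `f ∈ S[X]`: the ideal of `S` generated by the
coefficients of `f`. -/
noncomputable def polyContent {S : Type*} [CommSemiring S] (f : Polynomial S) : Ideal S :=
  Ideal.span (Set.range f.coeff)

/-- An ideal `I` of a semiring is subtractive if `a + b ∈ I` and `a ∈ I` imply `b ∈ I`. -/
def Subtractive {S : Type*} [CommSemiring S] (I : Ideal S) : Prop :=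
  ∀ a b : S, a + b ∈ I → a ∈ I → b ∈ I

section Aux

variable {S : Type*} [CommSemiring S]

lemma wg_coeff_mem_content (f : Polynomial S) (n : ℕ) : f.coeff n ∈ polyContent f :=
  Ideal.subset_span ⟨n, rfl⟩

lemma wg_content_le {f : Polynomial S} {I : Ideal S} (h : ∀ n, f.coeff n ∈ I) :
    polyContent f ≤ I := by
  rw [polyContent, Ideal.span_le]
  rintro x ⟨n, rfl⟩
  exact h n

lemma wg_content_mul_le (f g : Polynomial S) :
    polyContent (f * g) ≤ polyContent f * polyContent g := by
  apply wg_content_le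
  intro n
  rw [Polynomial.coeff_mul]
  exact Ideal.sum_mem _ fun p _ =>
    Ideal.mul_mem_mul (wg_coeff_mem_content f p.1) (wg_coeff_mem_content g p.2)

lemma wg_content_C_mul_X_pow_le {c : S} {J : Ideal S} (hc : c ∈ J) (k : ℕ) :
    polyContent (Polynomial.C c * Polynomial.X ^ k) ≤ J := by
  apply wg_content_le
  intro n
  rw [Polynomial.coeff_C_mul, Polynomial.coeff_X_pow]
  split_ifs <;> simp [hc]

lemma wg_content_add_le (u v : Polynomial S) :
    polyContent (u + v) ≤ polyContent u ⊔ polyContent v := by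
  apply wg_content_le
  intro n
  rw [Polynomial.coeff_add]
  exact Ideal.add_mem _ (Ideal.mem_sup_left (wg_coeff_mem_content u n))
    (Ideal.mem_sup_right (wg_coeff_mem_content v n))

lemma wg_two_iff_three :
    (∀ I : Ideal S, Subtractive I.radical) ↔ (∀ p : Ideal S, p.IsPrime → Subtractive p) := by
  constructor
  · intro h2 p hp
    have := h2 p
    rwa [hp.radical] at this
  · intro h3 I a b hab ha
    rw [Ideal.radical_eq_sInf] at hab ha ⊢
    rw [Ideal.mem_sInf] at hab ha ⊢
    intro p hp
    exact h3 p hp.2 a b (hab hp) (ha hp)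

lemma wg_prime_products {p : Ideal S} (hp : p.IsPrime) (hsub : Subtractive p)
    {f g : Polynomial S} (hfg : ∀ n, (f * g).coeff n ∈ p) (i j : ℕ) :
    f.coeff i * g.coeff j ∈ p := by
  classical
  by_contra hij
  have hf : ∃ i, f.coeff i ∉ p := ⟨i, fun h => hij (p.mul_mem_right _ h)⟩
  have hg : ∃ j, g.coeff j ∉ p := ⟨j, fun h => hij (p.mul_mem_left _ h)⟩
  set i0 := Nat.find hf with hi0def
  set j0 := Nat.find hg with hj0def
  have hi0 : f.coeff i0 ∉ p := Nat.find_spec hf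
  have hj0 : g.coeff j0 ∉ p := Nat.find_spec hg
  have hmem : ((i0, j0) : ℕ × ℕ) ∈ Finset.HasAntidiagonal.antidiagonal (i0 + j0) := by
    simp
  have hsum : ∑ x ∈ Finset.HasAntidiagonal.antidiagonal (i0 + j0), f.coeff x.1 * g.coeff x.2 ∈ p := by
    rw [← Polynomial.coeff_mul]; exact hfg _
  have hrest :
      ∑ x ∈ (Finset.HasAntidiagonal.antidiagonal (i0 + j0)).erase (i0, j0),
        f.coeff x.1 * g.coeff x.2 ∈ p := by
    apply Ideal.sum_mem
    intro x hx
    rw [Finset.mem_erase, Finset.HasAntidiagonal.mem_antidiagonal] at hx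
    rcases lt_or_ge x.1 i0 with h | h
    · exact p.mul_mem_right _ (not_not.mp (Nat.find_min hf h))
    · have hx1 : x.1 ≠ i0 := by
        intro he
        apply hx.1
        have h2 : x.2 = j0 := by omega
        exact Prod.ext he h2
      have hlt : x.2 < j0 := by omega
      exact p.mul_mem_left _ (not_not.mp (Nat.find_min hg hlt))
  have hkey := Finset.sum_erase_add (Finset.HasAntidiagonal.antidiagonal (i0 + j0))
    (fun x => f.coeff x.1 * g.coeff x.2) hmem
  have hmul : f.coeff i0 * g.coeff j0 ∈ p :=
    hsub _ _ (by rw [hkey]; exact hsum) hrest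
  rcases hp.mem_or_mem hmul with h | h
  · exact hi0 h
  · exact hj0 h

lemma wg_three_imp_one (h3 : ∀ p : Ideal S, p.IsPrime → Subtractive p) (f g : Polynomial S) :
    polyContent f * polyContent g ≤ (polyContent (f * g)).radical := by
  rw [Ideal.radical_eq_sInf]
  apply le_sInf
  rintro p ⟨hle, hp⟩
  rw [polyContent, polyContent, Ideal.span_mul_span', Ideal.span_le]
  rintro x hx
  rw [Set.mem_mul] at hx
  obtain ⟨x1, ⟨i, rfl⟩, x2, ⟨j, rfl⟩, rfl⟩ := hx
  exact wg_prime_products hp (h3 p hp) (fun n => hle (wg_coeff_mem_content _ n)) i j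

lemma wg_one_imp_two
    (h1 : ∀ f g : Polynomial S,
      polyContent (f * g) ≤ polyContent f * polyContent g ∧
        polyContent f * polyContent g ≤ (polyContent (f * g)).radical) :
    ∀ I : Ideal S, Subtractive I.radical := by
  intro I a b hab ha
  set f : Polynomial S :=
    Polynomial.C a * Polynomial.X ^ 2 + Polynomial.C b * Polynomial.X + Polynomial.C a with hf
  set g : Polynomial S :=
    Polynomial.C b * Polynomial.X ^ 2 + Polynomial.C b * Polynomial.X + Polynomial.C a with hg
  have hfg : f * g =
      Polynomial.C (a * b) * Polynomial.X ^ 4 +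
      Polynomial.C (a * b + b * b) * Polynomial.X ^ 3 +
      Polynomial.C (a * a + (a * b + b * b)) * Polynomial.X ^ 2 +
      Polynomial.C (a * b + a * b) * Polynomial.X ^ 1 +
      Polynomial.C (a * a) * Polynomial.X ^ 0 := by
    rw [hf, hg]
    simp only [map_mul, map_add]
    ring
  have m4 : a * b ∈ I.radical := I.radical.mul_mem_right b ha
  have m3 : a * b + b * b ∈ I.radical := by
    have h : a * b + b * b = (a + b) * b := by ring
    rw [h]
    exact I.radical.mul_mem_right b hab
  have m2 : a * a + (a * b + b * b) ∈ I.radical :=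
    Ideal.add_mem _ (I.radical.mul_mem_right a ha) m3
  have m1 : a * b + a * b ∈ I.radical := Ideal.add_mem _ m4 m4
  have m0 : a * a ∈ I.radical := I.radical.mul_mem_right a ha
  have hle : polyContent (f * g) ≤ I.radical := by
    rw [hfg]
    refine le_trans (wg_content_add_le _ _) (sup_le (le_trans (wg_content_add_le _ _)
      (sup_le (le_trans (wg_content_add_le _ _) (sup_le (le_trans (wg_content_add_le _ _)
        (sup_le ?_ ?_)) ?_)) ?_)) ?_)
    · exact wg_content_C_mul_X_pow_le m4 4
    · exact wg_content_C_mul_X_pow_le m3 3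
    · exact wg_content_C_mul_X_pow_le m2 2
    · exact wg_content_C_mul_X_pow_le m1 1
    · exact wg_content_C_mul_X_pow_le m0 0
  have hcf : f.coeff 1 = b := by
    rw [hf]; simp
  have hcg : g.coeff 1 = b := by
    rw [hg]; simp
  have hb2 : b * b ∈ polyContent f * polyContent g :=
    Ideal.mul_mem_mul (hcf ▸ wg_coeff_mem_content f 1) (hcg ▸ wg_coeff_mem_content g 1)
  have hbb : b * b ∈ I.radical := by
    have := (h1 f g).2 hb2
    have h2 := Ideal.radical_mono hle this
    rwa [Ideal.radical_idem] at h2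
  exact Ideal.mem_radical_of_pow_mem (m := 2) (by rwa [pow_two])

end Aux

/-- For a commutative semiring `S` the following are equivalent:
(1) `c(fg) ⊆ c(f)c(g) ⊆ √c(fg)` for all `f, g ∈ S[X]` (`S` is weak Gaussian);
(2) the radical of every ideal of `S` is subtractive;
(3) every prime ideal of `S` is subtractive. -/
theorem weakGaussian_tfae {S : Type*} [CommSemiring S] :
    ((∀ f g : Polynomial S,
        polyContent (f * g) ≤ polyContent f * polyContent g ∧
          polyContent f * polyContent g ≤ (polyContent (f * g)).radical) ↔
      (∀ I : Ideal S, Subtractive I.radical)) ∧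
    ((∀ I : Ideal S, Subtractive I.radical) ↔
      (∀ p : Ideal S, p.IsPrime → Subtractive p)) := by
  refine ⟨⟨wg_one_imp_two, ?_⟩, wg_two_iff_three⟩
  intro h2 f g
  exact ⟨wg_content_mul_le f g, wg_three_imp_one (wg_two_iff_three.mp h2) f g⟩
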